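/- Let F be a field, V an F-vector space, l ∈ ℕ, and v₀, v₁, …, v_{2l} ∈ V. Set s = ι(v₀) + ι(v₁)ι(v₂) + ι(v₃)ι(v₄) + ⋯ + ι(v_{2l−1})ι(v_{2l}) ∈ Λ(V). Then s^{l+1} = (l+1)! · ι(v₀)ι(v₁)ι(v₂)⋯ι(v_{2l}), where (l+1)! acts as a natural-number scalar. -/

import Mathlib

open ExteriorAlgebra

lemma grassmann_ι_swap {F V : Type*} [Field F] [AddCommGroup V] [Module F V] (x y : V) :
    ι F x * ι F y = - (ι F y * ι F x) :=
  eq_neg_of_add_eq_zero_left (ExteriorAlgebra.ι_add_mul_swap x y)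

lemma grassmann_ι_comm_pair {F V : Type*} [Field F] [AddCommGroup V] [Module F V] (a b c : V) :
    Commute (ι F a) (ι F b * ι F c) := by
  show ι F a * (ι F b * ι F c) = (ι F b * ι F c) * ι F a
  calc ι F a * (ι F b * ι F c)
      = (ι F a * ι F b) * ι F c := by noncomm_ring
    _ = (-(ι F b * ι F a)) * ι F c := by rw [← grassmann_ι_swap a b]
    _ = -(ι F b * (ι F a * ι F c)) := by noncomm_ring
    _ = -(ι F b * (-(ι F c * ι F a))) := by rw [← grassmann_ι_swap a c]
    _ = (ι F b * ι F c) * ι F a := by noncomm_ring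

lemma grassmann_pair_sq {F V : Type*} [Field F] [AddCommGroup V] [Module F V] (a b : V) :
    (ι F a * ι F b) ^ 2 = 0 := by
  rw [sq]
  calc (ι F a * ι F b) * (ι F a * ι F b)
      = ι F a * (ι F b * ι F a) * ι F b := by noncomm_ring
    _ = ι F a * (-(ι F a * ι F b)) * ι F b := by rw [grassmann_ι_swap b a]
    _ = -((ι F a * ι F a) * (ι F b * ι F b)) := by noncomm_ring
    _ = 0 := by rw [ExteriorAlgebra.ι_sq_zero]; simp

lemma grassmann_sum_pow_aux {R : Type*} [Ring R] :
    ∀ (L : List R), (∀ x ∈ L, ∀ y ∈ L, Commute x y) → (∀ x ∈ L, x ^ 2 = 0) →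
      L.sum ^ L.length = L.length.factorial • L.prod ∧ L.sum ^ (L.length + 1) = 0 := by
  intro L
  induction L with
  | nil => simp
  | cons a L ih =>
    intro hcomm hsq
    have hcomm' : ∀ x ∈ L, ∀ y ∈ L, Commute x y := fun x hx y hy =>
      hcomm x (by simp [hx]) y (by simp [hy])
    have hsq' : ∀ x ∈ L, x ^ 2 = 0 := fun x hx => hsq x (by simp [hx])
    obtain ⟨h1, h2⟩ := ih hcomm' hsq'
    have ha2 : a ^ 2 = 0 := hsq a (by simp)
    have haT : Commute a L.sum := by
      apply Commute.list_sum_right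
      intro y hy
      exact hcomm a (by simp) y (by simp [hy])
    have key : ∀ n, (a + L.sum) ^ (n + 1) =
        ∑ k ∈ Finset.range (n + 2), a ^ k * L.sum ^ (n + 1 - k) * ((n+1).choose k) :=
      fun n => haT.add_pow (n + 1)
    constructor
    · simp only [List.sum_cons, List.length_cons, List.prod_cons]
      rw [key L.length]
      rw [Finset.sum_range_succ', Finset.sum_range_succ']
      have hz : ∀ k, a ^ (k + 1 + 1) * L.sum ^ (L.length + 1 - (k + 1 + 1)) *
          (((L.length+1).choose (k+1+1)) : R) = 0 := by
        intro k
        rw [show a ^ (k+1+1) = a ^ k * a ^ 2 from pow_add a k 2, ha2]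
        simp
      simp only [hz, Finset.sum_const_zero, zero_add]
      rw [pow_zero, one_mul, Nat.sub_zero, h2, zero_mul, add_zero]
      rw [pow_one, Nat.add_sub_cancel, Nat.choose_one_right, h1]
      have hc : (a * L.prod) * ((L.length + 1 : ℕ) : R) = (L.length + 1) • (a * L.prod) := by
        rw [(Nat.cast_commute (L.length + 1) (a * L.prod)).symm.eq, nsmul_eq_mul]
      rw [mul_smul_comm, smul_mul_assoc, hc, smul_smul, Nat.factorial_succ, mul_comm]
    · simp only [List.sum_cons, List.length_cons]
      rw [key (L.length + 1)]
      apply Finset.sum_eq_zero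
      intro k _
      match k with
      | 0 => simp only [pow_zero, one_mul]
             rw [show L.length + 1 + 1 - 0 = (L.length + 1) + 1 by omega, pow_succ, h2,
               zero_mul, zero_mul]
      | 1 => rw [pow_one, show L.length + 1 + 1 - 1 = L.length + 1 by omega, h2]; simp
      | (k+2) => rw [show a ^ (k+2) = a ^ k * a ^ 2 from pow_add a k 2, ha2]; simp

lemma grassmann_ofFn_prod_succ1 {M : Type*} [Monoid M] {n : ℕ} (f : Fin (n+1) → M) :
    (List.ofFn f).prod
      = (List.ofFn fun i : Fin n => f i.castSucc).prod * f (Fin.last n) := by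
  rw [List.ofFn_succ', List.prod_concat]

lemma grassmann_ofFn_prod_succ2 {M : Type*} [Monoid M] {n : ℕ} (f : Fin (n+2) → M) :
    (List.ofFn f).prod
      = (List.ofFn fun i : Fin n => f (i.castSucc.castSucc)).prod *
        (f ((Fin.last n).castSucc) * f (Fin.last (n+1))) := by
  rw [grassmann_ofFn_prod_succ1, grassmann_ofFn_prod_succ1, mul_assoc]

lemma grassmann_pair_prod {F V : Type*} [Field F] [AddCommGroup V] [Module F V] :
    ∀ (l : ℕ) (v : Fin (2*l+1) → V),
      (List.ofFn fun i => ι F (v i)).prod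
        = ι F (v 0) * (List.ofFn fun i : Fin l =>
            ι F (v ⟨2*(i:ℕ)+1, (by omega : 2*(i:ℕ)+1 < 2*l+1+0)⟩) *
              ι F (v ⟨2*(i:ℕ)+2, (by omega : 2*(i:ℕ)+2 < 2*l+1+0)⟩)).prod := by
  intro l
  induction l with
  | zero => intro v; simp
  | succ l ih =>
    intro v
    have h2 := grassmann_ofFn_prod_succ2 (n := 2*l+1) (f := fun i => ι F (v i))
    have hih := ih (fun i => v (i.castSucc.castSucc))
    calc (List.ofFn fun i : Fin (2*(l+1)+1) => ι F (v i)).prod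
        = (List.ofFn fun i : Fin (2*l+1) => ι F (v (i.castSucc.castSucc))).prod *
            (ι F (v ((Fin.last (2*l+1)).castSucc)) * ι F (v (Fin.last (2*l+1+1)))) := h2
      _ = (ι F (v 0) * (List.ofFn fun i : Fin l =>
              ι F (v ⟨2*(i:ℕ)+1, by omega⟩) * ι F (v ⟨2*(i:ℕ)+2, by omega⟩)).prod) *
            (ι F (v ⟨2*l+1, by omega⟩) * ι F (v ⟨2*l+2, by omega⟩)) := by
          rw [hih]
          rfl
      _ = ι F (v 0) * (List.ofFn fun i : Fin (l+1) =>
            ι F (v ⟨2*(i:ℕ)+1, by omega⟩) * ι F (v ⟨2*(i:ℕ)+2, by omega⟩)).prod := by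
          rw [grassmann_ofFn_prod_succ1 (n := l)
            (f := fun i : Fin (l+1) =>
              ι F (v ⟨2*(i:ℕ)+1, by omega⟩) * ι F (v ⟨2*(i:ℕ)+2, by omega⟩))]
          rw [mul_assoc]
          rfl

/-- For `s = ι(v₀) + ι(v₁)ι(v₂) + ⋯ + ι(v_{2l−1})ι(v_{2l})` in Λ(V) one has
`s ^ (l+1) = (l+1)! • ι(v₀)ι(v₁)⋯ι(v_{2l})`. -/
theorem grassmann_odd_sum_pow_succ
    (F : Type*) [Field F] (V : Type*) [AddCommGroup V] [Module F V]
    (l : ℕ) (v : Fin (2 * l + 1) → V)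
    (s : ExteriorAlgebra F V)
    (hs : s = ExteriorAlgebra.ι F (v 0)
        + ∑ i : Fin l,
            ExteriorAlgebra.ι F (v ⟨2 * (i : ℕ) + 1, by omega⟩)
              * ExteriorAlgebra.ι F (v ⟨2 * (i : ℕ) + 2, by omega⟩)) :
    s ^ (l + 1)
      = (l + 1).factorial • (List.ofFn fun i => ExteriorAlgebra.ι F (v i)).prod := by
  set g : Fin (l+1) → ExteriorAlgebra F V :=
    Fin.cons (ι F (v 0)) (fun i : Fin l =>
      ι F (v ⟨2*(i:ℕ)+1, by omega⟩) * ι F (v ⟨2*(i:ℕ)+2, by omega⟩)) with hg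
  have hmem : ∀ x ∈ List.ofFn g,
      x = ι F (v 0) ∨ ∃ i : Fin l,
        x = ι F (v ⟨2*(i:ℕ)+1, by omega⟩) * ι F (v ⟨2*(i:ℕ)+2, by omega⟩) := by
    intro x hx
    obtain ⟨i, rfl⟩ := List.mem_ofFn.1 hx
    refine Fin.cases ?_ ?_ i
    · left; simp [hg]
    · intro j; right; exact ⟨j, by simp [hg]⟩
  have hcomm : ∀ x ∈ List.ofFn g, ∀ y ∈ List.ofFn g, Commute x y := by
    intro x hx y hy
    rcases hmem x hx with rfl | ⟨i, rfl⟩ <;> rcases hmem y hy with rfl | ⟨j, rfl⟩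
    · exact Commute.refl _
    · exact grassmann_ι_comm_pair _ _ _
    · exact (grassmann_ι_comm_pair _ _ _).symm
    · exact Commute.mul_left (grassmann_ι_comm_pair _ _ _) (grassmann_ι_comm_pair _ _ _)
  have hsq : ∀ x ∈ List.ofFn g, x ^ 2 = 0 := by
    intro x hx
    rcases hmem x hx with rfl | ⟨i, rfl⟩
    · rw [sq, ExteriorAlgebra.ι_sq_zero]
    · exact grassmann_pair_sq _ _
  obtain ⟨h1, -⟩ := grassmann_sum_pow_aux (List.ofFn g) hcomm hsq
  have hsum : (List.ofFn g).sum = s := by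
    rw [List.sum_ofFn, Fin.sum_univ_succ, hs]
    simp [hg]
  have hlen : (List.ofFn g).length = l + 1 := by simp
  have hprod : (List.ofFn g).prod
      = (List.ofFn fun i => ι F (v i)).prod := by
    rw [grassmann_pair_prod l v]
    rw [hg, List.ofFn_succ, List.prod_cons]
    simp
  rw [hsum, hlen, hprod] at h1
  exact h1
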